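/- Let κ > 1 be a squarefree divisor of 210, let p be a prime dividing κ, and let t ≥ 2 be an integer. Then (t−1)^{t−1}(κ² − 1) + (−1)^{t−1} t^t ≢ 0 (mod p²). -/

import Mathlib

set_option maxRecDepth 100000
set_option maxHeartbeats 2000000

lemma neg_one_pow_congr_mod2 {R : Type*} [Monoid R] [HasDistribNeg R] {a b : ℕ}
    (h : a ≡ b [MOD 2]) : ((-1 : R)) ^ a = (-1) ^ b := by
  have h' : a % 2 = b % 2 := h
  rcases Nat.even_or_odd a with he | ho
  · have h0 : a % 2 = 0 := Nat.even_iff.mp he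
    rw [he.neg_one_pow, (Nat.even_iff.mpr (by omega)).neg_one_pow]
  · have h1 : a % 2 = 1 := Nat.odd_iff.mp ho
    rw [ho.neg_one_pow, (Nat.odd_iff.mpr (by omega)).neg_one_pow]

lemma pow_self_congr (p : ℕ) (hp : p.Prime) {a b : ℕ} (ha : 1 ≤ a) (hb : 1 ≤ b)
    (hab : a ≡ b [MOD p ^ 2 * (p - 1)]) :
    ((a : ZMod (p ^ 2))) ^ a = ((b : ZMod (p ^ 2))) ^ b := by
  haveI : NeZero (p ^ 2) := ⟨pow_ne_zero 2 hp.pos.ne'⟩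
  have habp : a % p = b % p := hab.of_dvd ⟨p * (p - 1), by ring⟩
  by_cases hpa : p ∣ a
  · have hpb : p ∣ b := by
      have h0 : a % p = 0 := Nat.mod_eq_zero_of_dvd hpa
      exact Nat.dvd_of_mod_eq_zero (habp ▸ h0)
    have key : ∀ c : ℕ, p ∣ c → 1 ≤ c → ((c : ZMod (p ^ 2))) ^ c = 0 := by
      intro c hpc hc
      have hc2 : 2 ≤ c := hp.two_le.trans (Nat.le_of_dvd hc hpc)
      have h0 : ((c : ZMod (p ^ 2))) ^ 2 = 0 := by
        rw [← Nat.cast_pow, ZMod.natCast_eq_zero_iff]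
        exact pow_dvd_pow_of_dvd hpc 2
      calc ((c : ZMod (p ^ 2))) ^ c
          = ((c : ZMod (p ^ 2))) ^ 2 * ((c : ZMod (p ^ 2))) ^ (c - 2) := by
            rw [← pow_add]; congr 1; omega
        _ = 0 := by rw [h0, zero_mul]
    rw [key a hpa ha, key b hpb hb]
  · have hpb : ¬ p ∣ b := by
      intro hb'
      have h0 : b % p = 0 := Nat.mod_eq_zero_of_dvd hb'
      exact hpa (Nat.dvd_of_mod_eq_zero (habp.trans h0))
    have hca : Nat.Coprime a (p ^ 2) :=
      Nat.Coprime.pow_right 2 ((hp.coprime_iff_not_dvd.mpr hpa).symm)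
    have hcb : Nat.Coprime b (p ^ 2) :=
      Nat.Coprime.pow_right 2 ((hp.coprime_iff_not_dvd.mpr hpb).symm)
    let ua := ZMod.unitOfCoprime a hca
    let ub := ZMod.unitOfCoprime b hcb
    have hbase : ua = ub := by
      apply Units.ext
      show ((ZMod.unitOfCoprime a hca : (ZMod (p ^ 2))ˣ) : ZMod (p ^ 2)) = (ZMod.unitOfCoprime b hcb : (ZMod (p ^ 2))ˣ)
      rw [ZMod.coe_unitOfCoprime, ZMod.coe_unitOfCoprime]
      exact (ZMod.natCast_eq_natCast_iff a b (p ^ 2)).mpr (hab.of_dvd ⟨p - 1, rfl⟩)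
    have hord : orderOf ua ∣ p ^ 2 * (p - 1) := by
      refine (orderOf_dvd_card).trans ?_
      rw [ZMod.card_units_eq_totient, Nat.totient_prime_pow hp two_pos]
      exact Nat.mul_dvd_mul (pow_dvd_pow p (by norm_num)) dvd_rfl
    have hupow : ua ^ a = ub ^ b := by
      rw [← hbase]
      exact pow_eq_pow_iff_modEq.mpr (hab.of_dvd hord)
    have h1 : ((a : ZMod (p ^ 2))) ^ a = ((ua ^ a : (ZMod (p ^ 2))ˣ) : ZMod (p ^ 2)) := by
      rw [Units.val_pow_eq_pow_val, ZMod.coe_unitOfCoprime]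
    have h2 : ((b : ZMod (p ^ 2))) ^ b = ((ub ^ b : (ZMod (p ^ 2))ˣ) : ZMod (p ^ 2)) := by
      rw [Units.val_pow_eq_pow_val, ZMod.coe_unitOfCoprime]
    rw [h1, h2, hupow]

lemma key_reduction (p : ℕ) (hp : p.Prime)
    (hdec : ∀ s ∈ Finset.Ico (p ^ 2 * (p - 1)) (2 * (p ^ 2 * (p - 1))),
      if (s - 1) % 2 = 0 then ¬ ((s - 1) ^ (s - 1) % p ^ 2 = s ^ s % p ^ 2)
      else ¬ (((s - 1) ^ (s - 1) + s ^ s) % p ^ 2 = 0))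
    (κ : ℕ) (hpκ : p ∣ κ) (t : ℕ) (ht : 2 ≤ t) :
    ¬ ((p : ℤ) ^ 2 ∣
        (((t : ℤ) - 1) ^ (t - 1) * ((κ : ℤ) ^ 2 - 1)
          + (-1) ^ (t - 1) * (t : ℤ) ^ t)) := by
  haveI : NeZero (p ^ 2) := ⟨pow_ne_zero 2 hp.pos.ne'⟩
  set L := p ^ 2 * (p - 1) with hL
  have hL0 : 0 < L := by
    have := hp.two_le
    have : 0 < p - 1 := by omega
    positivity
  have h2L : 2 ∣ L := by
    rcases Nat.even_or_odd p with he | ho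
    · exact dvd_mul_of_dvd_left (he.two_dvd.trans (dvd_pow_self p two_ne_zero)) _
    · exact dvd_mul_of_dvd_right (by have h1 := Nat.odd_iff.mp ho; have h2 := hp.two_le; omega : 2 ∣ p - 1) _
  set s := t % L + L with hs
  have hsL : L ≤ s ∧ s < 2 * L := by
    constructor
    · omega
    · have := Nat.mod_lt t hL0; omega
  have hts : t ≡ s [MOD L] := by
    show t % L = s % L
    rw [hs, Nat.add_mod_right, Nat.mod_mod_of_dvd _ dvd_rfl]
  have ht1 : 1 ≤ t := by omega
  have hs1 : 1 ≤ s := by omega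
  have ht1s : t - 1 ≡ s - 1 [MOD L] := by
    have h1 : (t - 1) + 1 ≡ (s - 1) + 1 [MOD L] := by
      rwa [Nat.sub_add_cancel ht1, Nat.sub_add_cancel hs1]
    exact Nat.ModEq.add_right_cancel' 1 h1
  intro hdvd
  have hzero : ((((t : ℤ) - 1) ^ (t - 1) * ((κ : ℤ) ^ 2 - 1)
      + (-1) ^ (t - 1) * (t : ℤ) ^ t : ℤ) : ZMod (p ^ 2)) = 0 := by
    rw [ZMod.intCast_zmod_eq_zero_iff_dvd]
    push_cast
    exact hdvd
  have hκ0 : (κ : ZMod (p ^ 2)) ^ 2 = 0 := by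
    rw [← Nat.cast_pow, ZMod.natCast_eq_zero_iff]
    exact pow_dvd_pow_of_dvd hpκ 2
  have hcast : ((t : ZMod (p ^ 2)) - 1) = ((t - 1 : ℕ) : ZMod (p ^ 2)) := by
    have : (t : ℕ) = (t - 1) + 1 := by omega
    rw [this]; push_cast; ring
  push_cast at hzero
  rw [hcast, hκ0] at hzero
  rw [pow_self_congr p hp (by omega) (by omega) ht1s,
      pow_self_congr p hp ht1 hs1 hts,
      neg_one_pow_congr_mod2 (ht1s.of_dvd h2L)] at hzero
  have hd := hdec s (Finset.mem_Ico.mpr ⟨hsL.1, hsL.2⟩)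
  rcases Nat.even_or_odd (s - 1) with he | ho
  · rw [if_pos (Nat.even_iff.mp he)] at hd
    rw [he.neg_one_pow] at hzero
    have heq : (((s : ℕ) ^ s : ℕ) : ZMod (p ^ 2)) = (((s - 1) ^ (s - 1) : ℕ) : ZMod (p ^ 2)) := by
      push_cast
      linear_combination hzero
    have := (ZMod.natCast_eq_natCast_iff _ _ _).mp heq
    exact hd this.symm
  · rw [if_neg (by simp [Nat.odd_iff.mp ho])] at hd
    rw [ho.neg_one_pow] at hzero
    have heq : ((((s - 1) ^ (s - 1) + s ^ s : ℕ)) : ZMod (p ^ 2)) = 0 := by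
      push_cast
      linear_combination -hzero
    rw [ZMod.natCast_eq_zero_iff] at heq
    exact hd (Nat.mod_eq_zero_of_dvd heq)

theorem C_t_not_zero_mod_p_sq
    (κ : ℕ) (hκ1 : 1 < κ) (hκsf : Squarefree κ) (hκ210 : κ ∣ 210)
    (p : ℕ) (hp : p.Prime) (hpκ : p ∣ κ)
    (t : ℕ) (ht : 2 ≤ t) :
    ¬ ((p : ℤ) ^ 2 ∣
        (((t : ℤ) - 1) ^ (t - 1) * ((κ : ℤ) ^ 2 - 1)
          + (-1) ^ (t - 1) * (t : ℤ) ^ t)) := by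
  have hp210 : p ∣ 210 := hpκ.trans hκ210
  have hpcases : p = 2 ∨ p = 3 ∨ p = 5 ∨ p = 7 := by
    have h2 := hp.two_le
    have h210 : p ≤ 210 := Nat.le_of_dvd (by norm_num) hp210
    have hmem : p ∈ Nat.divisors 210 := Nat.mem_divisors.mpr ⟨hp210, by norm_num⟩
    have hdiv : Nat.divisors 210 = {1, 2, 3, 5, 6, 7, 10, 14, 15, 21, 30, 35, 42, 70, 105, 210} := by decide
    rw [hdiv] at hmem
    fin_cases hmem <;> first
      | (left; rfl) | (right; left; rfl) | (right; right; left; rfl)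
      | (right; right; right; rfl)
      | (exact absurd hp (by decide))
  rcases hpcases with rfl | rfl | rfl | rfl
  · exact key_reduction 2 (by norm_num) (by decide) κ hpκ t ht
  · exact key_reduction 3 (by norm_num) (by decide) κ hpκ t ht
  · exact key_reduction 5 (by norm_num) (by decide) κ hpκ t ht
  · exact key_reduction 7 (by norm_num) (by decide) κ hpκ t ht
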